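/- arXiv:1611.09727 — 5 statements merged into one kernel-verified Lean document; each statement's English description precedes it below -/
import Mathlib

section
/- Single-breakpoint CUSUM lower bound: Let s ≤ η < e be integers, a, b ∈ ℝ with |a − b| ≥ m > 0, and let σ_t = a for s ≤ t ≤ η and σ_t = b for η < t ≤ e; set n = e − s + 1. If min(η − s + 1, e − η) ≥ δ for some 0 < δ ≤ n/2, then |S^η_{s,e}| ≥ m · √(δ(n − δ)/n) ≥ m √(δ/2). -/
/-- The CUSUM statistic `𝕐^b_{s,e}` of the sequence `y` over the interval `[s, e]`
with split point `b`. -/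
noncomputable def cusum (y : ℕ → ℝ) (s b e : ℕ) : ℝ :=
  Real.sqrt (((e : ℝ) - b) / ((((e : ℝ) - s + 1)) * ((b : ℝ) - s + 1))) *
      ∑ t ∈ Finset.Icc s b, y t -
    Real.sqrt (((b : ℝ) - s + 1) / ((((e : ℝ) - s + 1)) * ((e : ℝ) - b))) *
      ∑ t ∈ Finset.Icc (b + 1) e, y t

/-- **Single-breakpoint CUSUM lower bound.**  If `σ_t = a` on `[s, η]`, `σ_t = b` on
`(η, e]`, `|a − b| ≥ m > 0` and both segments have length at least `δ` with
`0 < δ ≤ n/2` (where `n = e − s + 1`), then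
`|S^η_{s,e}| ≥ m·√(δ(n − δ)/n) ≥ m·√(δ/2)`. -/
theorem cusum_single_breakpoint_lower_bound (s η e : ℕ) (hsη : s ≤ η) (hηe : η < e)
    (a b m δ : ℝ) (σ : ℕ → ℝ) (hm : 0 < m) (hab : m ≤ |a - b|)
    (ha : ∀ t, s ≤ t → t ≤ η → σ t = a) (hb : ∀ t, η < t → t ≤ e → σ t = b)
    (hδpos : 0 < δ) (hδhalf : δ ≤ ((e : ℝ) - s + 1) / 2)
    (hδmin : δ ≤ min ((η : ℝ) - s + 1) ((e : ℝ) - η)) :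
    m * Real.sqrt (δ * (((e : ℝ) - s + 1) - δ) / ((e : ℝ) - s + 1)) ≤ |cusum σ s η e| ∧
      m * Real.sqrt (δ / 2) ≤
        m * Real.sqrt (δ * (((e : ℝ) - s + 1) - δ) / ((e : ℝ) - s + 1)) := by
  set N1 : ℝ := (η : ℝ) - s + 1 with hN1def
  set N2 : ℝ := (e : ℝ) - η with hN2def
  set n : ℝ := (e : ℝ) - s + 1 with hndef
  have hse : s ≤ e := le_of_lt (lt_of_le_of_lt hsη hηe)
  have hsηR : (s : ℝ) ≤ η := Nat.cast_le.mpr hsη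
  have hηeR : (η : ℝ) < e := Nat.cast_lt.mpr hηe
  have hN1 : 0 < N1 := by simp only [hN1def]; linarith
  have hN2 : 0 < N2 := by simp only [hN2def]; linarith
  have hn : 0 < n := by simp only [hndef]; nlinarith
  have hnsum : n = N1 + N2 := by simp only [hndef, hN1def, hN2def]; ring
  have hδN1 : δ ≤ N1 := le_trans hδmin (min_le_left _ _)
  have hδN2 : δ ≤ N2 := le_trans hδmin (min_le_right _ _)
  -- sums on the two segments
  have hsum1 : ∑ t ∈ Finset.Icc s η, σ t = N1 * a := by
    rw [Finset.sum_congr rfl (fun t ht => ha t (Finset.mem_Icc.mp ht).1 (Finset.mem_Icc.mp ht).2),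
      Finset.sum_const, Nat.card_Icc, nsmul_eq_mul]
    congr 1
    rw [Nat.cast_sub (by omega)]
    push_cast
    simp only [hN1def]; ring
  have hsum2 : ∑ t ∈ Finset.Icc (η + 1) e, σ t = N2 * b := by
    rw [Finset.sum_congr rfl (fun t ht =>
        hb t (by exact_mod_cast Nat.lt_of_succ_le (Finset.mem_Icc.mp ht).1)
          (Finset.mem_Icc.mp ht).2),
      Finset.sum_const, Nat.card_Icc, nsmul_eq_mul]
    congr 1
    rw [Nat.cast_sub (by omega)]
    push_cast
    simp only [hN2def]; ring
  -- collapse the sqrts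
  have h1 : Real.sqrt (N2 / (n * N1)) * N1 = Real.sqrt (N1 * N2 / n) := by
    nth_rewrite 2 [← Real.sqrt_sq hN1.le]
    rw [← Real.sqrt_mul (by positivity)]
    congr 1
    field_simp
  have h2 : Real.sqrt (N1 / (n * N2)) * N2 = Real.sqrt (N1 * N2 / n) := by
    nth_rewrite 2 [← Real.sqrt_sq hN2.le]
    rw [← Real.sqrt_mul (by positivity)]
    congr 1
    field_simp
  have hcusum : cusum σ s η e = Real.sqrt (N1 * N2 / n) * (a - b) := by
    unfold cusum
    rw [hsum1, hsum2]
    have : Real.sqrt (((e : ℝ) - η) / (((e : ℝ) - s + 1) * ((η : ℝ) - s + 1))) * (N1 * a) -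
        Real.sqrt (((η : ℝ) - s + 1) / (((e : ℝ) - s + 1) * ((e : ℝ) - η))) * (N2 * b) =
        (Real.sqrt (N2 / (n * N1)) * N1) * a - (Real.sqrt (N1 / (n * N2)) * N2) * b := by
      ring
    rw [this, h1, h2]
    ring
  have habs : |cusum σ s η e| = Real.sqrt (N1 * N2 / n) * |a - b| := by
    rw [hcusum, abs_mul, abs_of_nonneg (Real.sqrt_nonneg _)]
  have hsqrtle : Real.sqrt (δ * (n - δ) / n) ≤ Real.sqrt (N1 * N2 / n) := by
    apply Real.sqrt_le_sqrt
    rw [div_le_div_iff_of_pos_right hn]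
    nlinarith [mul_nonneg (sub_nonneg.mpr hδN1) (sub_nonneg.mpr hδN2)]
  constructor
  · rw [habs]
    calc m * Real.sqrt (δ * (n - δ) / n)
        ≤ |a - b| * Real.sqrt (N1 * N2 / n) :=
          mul_le_mul hab hsqrtle (Real.sqrt_nonneg _) (abs_nonneg _)
      _ = Real.sqrt (N1 * N2 / n) * |a - b| := by ring
  · apply mul_le_mul_of_nonneg_left _ hm.le
    apply Real.sqrt_le_sqrt
    rw [div_le_div_iff₀ (by norm_num) hn]
    nlinarith [mul_nonneg hδpos.le (by linarith : (0:ℝ) ≤ n - 2 * δ)]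
end

section
/- CUSUM maximum attained at a breakpoint: Let (σ_t)_{t=s}^{e} be a real-valued sequence that is piecewise constant with breakpoints s ≤ η_1 < … < η_q < e (q ≥ 1), i.e., σ is constant on [s, η_1], on each (η_j, η_{j+1}], and on (η_q, e]. Then the maximum of |S^t_{s,e}| over s < t < e is attained at one of the breakpoints: there exists 1 ≤ r* ≤ q with |S^{η_{r*}}_{s,e}| = max_{s<t<e} |S^t_{s,e}|. -/
lemma cusum_aux_one (d K u u1 u2 : ℝ) (h1 : 0 < u1) (h12 : u1 ≤ u) (h2 : u ≤ u2) :
    d / u - K * u ≤ max |d / u1 - K * u1| |d / u2 - K * u2| := by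
  have hu : 0 < u := h1.trans_le h12
  have hu2 : 0 < u2 := hu.trans_le h2
  rcases le_or_gt (-d - K * (u * u1)) 0 with hc1 | hc1
  · have key : d / u - K * u ≤ d / u1 - K * u1 := by
      have h' : (d / u - K * u) - (d / u1 - K * u1)
          = (u - u1) * (-d - K * (u * u1)) / (u * u1) := by
        field_simp
        ring
      have : (u - u1) * (-d - K * (u * u1)) / (u * u1) ≤ 0 :=
        div_nonpos_of_nonpos_of_nonneg
          (mul_nonpos_of_nonneg_of_nonpos (by linarith) hc1) (by positivity)
      linarith [h' ▸ this]
    exact key.trans ((le_abs_self _).trans (le_max_left _ _))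
  · rcases le_or_gt 0 (-d - K * (u * u2)) with hc2 | hc2
    · have key : d / u - K * u ≤ d / u2 - K * u2 := by
        have h' : (d / u - K * u) - (d / u2 - K * u2)
            = (u - u2) * (-d - K * (u * u2)) / (u * u2) := by
          field_simp
          ring
        have : (u - u2) * (-d - K * (u * u2)) / (u * u2) ≤ 0 :=
          div_nonpos_of_nonpos_of_nonneg
            (mul_nonpos_of_nonpos_of_nonneg (by linarith) hc2) (by positivity)
        linarith [h' ▸ this]
      exact key.trans ((le_abs_self _).trans (le_max_right _ _))
    · have hK : 0 < K := by nlinarith [mul_nonneg hu.le (sub_nonneg.mpr (h12.trans h2))]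
      have hd : d < 0 := by nlinarith [mul_pos hu h1]
      have : d / u - K * u ≤ 0 := by
        have h1' : d / u < 0 := div_neg_of_neg_of_pos hd hu
        nlinarith
      exact this.trans (le_max_of_le_left (abs_nonneg _))

lemma cusum_aux_abs (d K u u1 u2 : ℝ) (h1 : 0 < u1) (h12 : u1 ≤ u) (h2 : u ≤ u2) :
    |d / u - K * u| ≤ max |d / u1 - K * u1| |d / u2 - K * u2| := by
  rw [abs_le]
  constructor
  · have := cusum_aux_one (-d) (-K) u u1 u2 h1 h12 h2
    have e0 : ∀ v : ℝ, (-d) / v - (-K) * v = -(d / v - K * v) := by intro v; ring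
    rw [e0, e0, e0, abs_neg, abs_neg] at this
    linarith
  · exact cusum_aux_one d K u u1 u2 h1 h12 h2

lemma sum_icc_split (σ : ℕ → ℝ) (s l t : ℕ) (hsl : s ≤ l) (hlt : l ≤ t) :
    ∑ x ∈ Finset.Icc s t, σ x
      = ∑ x ∈ Finset.Icc s l, σ x + ∑ x ∈ Finset.Icc (l+1) t, σ x := by
  rw [← Finset.Ico_add_one_right_eq_Icc, ← Finset.Ico_add_one_right_eq_Icc, ← Finset.Ico_add_one_right_eq_Icc]
  rw [← Finset.sum_Ico_consecutive _ (by omega : s ≤ l + 1) (by omega : l + 1 ≤ t + 1)]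

lemma sum_icc_const (c : ℝ) (σ : ℕ → ℝ) (l t : ℕ) (hlt : l ≤ t)
    (hc : ∀ x, l < x → x ≤ t → σ x = c) :
    ∑ x ∈ Finset.Icc (l+1) t, σ x = c * ((t : ℝ) - l) := by
  have h1 : ∑ x ∈ Finset.Icc (l+1) t, σ x = ∑ _x ∈ Finset.Icc (l+1) t, c :=
    Finset.sum_congr rfl (fun x hx => by
      have hx' := Finset.mem_Icc.mp hx
      exact hc x (by omega) hx'.2)
  rw [h1, Finset.sum_const, Nat.card_Icc]
  rw [nsmul_eq_mul]
  have : ((t + 1 - (l+1) : ℕ) : ℝ) = (t : ℝ) - l := by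
    have h2 : t + 1 - (l+1) = t - l := by omega
    rw [h2, Nat.cast_sub hlt]
  rw [this]; ring

lemma cusum_formula (σ : ℕ → ℝ) (s t e : ℕ) (hst : s ≤ t) (hte : t < e)
    (c dd : ℝ) (hA : ∑ x ∈ Finset.Icc s t, σ x = c * ((t:ℝ) - s + 1) + dd) :
    cusum σ s t e = (1 / Real.sqrt ((e:ℝ) - s + 1)) *
      (dd / Real.sqrt (((t:ℝ) - s + 1) / ((e:ℝ) - t))
        - ((∑ x ∈ Finset.Icc s e, σ x) - c * ((e:ℝ) - s + 1) - dd) *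
            Real.sqrt (((t:ℝ) - s + 1) / ((e:ℝ) - t))) := by
  have hsplit := sum_icc_split σ s t e hst (le_of_lt hte)
  have hT : ∑ x ∈ Finset.Icc (t+1) e, σ x
      = (∑ x ∈ Finset.Icc s e, σ x) - (c * ((t:ℝ) - s + 1) + dd) := by
    rw [hsplit, hA]; ring
  have hm : (0:ℝ) < (t:ℝ) - s + 1 := by
    have : (s:ℝ) ≤ t := Nat.cast_le.mpr hst
    linarith
  have hnm : (0:ℝ) < (e:ℝ) - t := by
    have : (t:ℝ) < e := Nat.cast_lt.mpr hte
    linarith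
  have hn : ((e:ℝ) - s + 1) = ((t:ℝ) - s + 1) + ((e:ℝ) - t) := by ring
  rw [cusum, hA, hT, hn]
  set m : ℝ := (t:ℝ) - s + 1 with hmdef
  set nm : ℝ := (e:ℝ) - t with hnmdef
  rw [Real.sqrt_div hnm.le, Real.sqrt_mul (by positivity : (0:ℝ) ≤ m + nm),
    Real.sqrt_div hm.le, Real.sqrt_mul (by positivity : (0:ℝ) ≤ m + nm),
    Real.sqrt_div hm.le]
  have ham : Real.sqrt m * Real.sqrt m = m := Real.mul_self_sqrt hm.le
  have hanm : Real.sqrt nm * Real.sqrt nm = nm := Real.mul_self_sqrt hnm.le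
  have hpm : (0:ℝ) < Real.sqrt m := Real.sqrt_pos.mpr hm
  have hpnm : (0:ℝ) < Real.sqrt nm := Real.sqrt_pos.mpr hnm
  have hpn : (0:ℝ) < Real.sqrt (m + nm) := Real.sqrt_pos.mpr (by positivity)
  set a : ℝ := Real.sqrt m
  set b : ℝ := Real.sqrt nm
  set cc : ℝ := Real.sqrt (m + nm)
  rw [← ham, ← hanm]
  field_simp
  ring

lemma u_mono (s e t t' : ℕ) (hst : s ≤ t) (htt : t ≤ t') (hte : t' < e) :
    Real.sqrt (((t:ℝ) - s + 1) / ((e:ℝ) - t))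
      ≤ Real.sqrt (((t':ℝ) - s + 1) / ((e:ℝ) - t')) := by
  have h1 : (s:ℝ) ≤ t := Nat.cast_le.mpr hst
  have h2 : (t:ℝ) ≤ t' := Nat.cast_le.mpr htt
  have h3 : (t':ℝ) < e := Nat.cast_lt.mpr hte
  apply Real.sqrt_le_sqrt
  apply div_le_div₀ (by linarith) (by linarith) (by linarith) (by linarith)

lemma u_pos (s e t : ℕ) (hst : s ≤ t) (hte : t < e) :
    0 < Real.sqrt (((t:ℝ) - s + 1) / ((e:ℝ) - t)) := by
  have h1 : (s:ℝ) ≤ t := Nat.cast_le.mpr hst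
  have h3 : (t:ℝ) < e := Nat.cast_lt.mpr hte
  apply Real.sqrt_pos.mpr
  apply div_pos (by linarith) (by linarith)

lemma seg_bound (σ : ℕ → ℝ) (s e l r t : ℕ) (hsl : s ≤ l) (hlt : l ≤ t) (htr : t ≤ r)
    (hre : r < e) (c dd : ℝ)
    (hAl : ∑ x ∈ Finset.Icc s l, σ x = c * ((l:ℝ) - s + 1) + dd)
    (hAt : ∑ x ∈ Finset.Icc s t, σ x = c * ((t:ℝ) - s + 1) + dd)
    (hAr : ∑ x ∈ Finset.Icc s r, σ x = c * ((r:ℝ) - s + 1) + dd) :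
    |cusum σ s t e| ≤ max |cusum σ s l e| |cusum σ s r e| := by
  have hle : l < e := by omega
  have hte : t < e := by omega
  rw [cusum_formula σ s l e hsl hle c dd hAl,
      cusum_formula σ s t e (hsl.trans hlt) hte c dd hAt,
      cusum_formula σ s r e (by omega) hre c dd hAr]
  have hn : (0:ℝ) ≤ 1 / Real.sqrt ((e:ℝ) - s + 1) := by positivity
  rw [abs_mul, abs_mul, abs_mul, abs_of_nonneg hn, ← mul_max_of_nonneg _ _ hn]
  apply mul_le_mul_of_nonneg_left _ hn
  exact cusum_aux_abs dd _ _ _ _ (u_pos s e l hsl hle) (u_mono s e l t hsl hlt hte)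
    (u_mono s e t r (hsl.trans hlt) htr hre)

lemma seg_up (σ : ℕ → ℝ) (s e r t : ℕ) (hst : s ≤ t) (htr : t ≤ r) (hre : r < e)
    (c : ℝ)
    (hAt : ∑ x ∈ Finset.Icc s t, σ x = c * ((t:ℝ) - s + 1) + 0)
    (hAr : ∑ x ∈ Finset.Icc s r, σ x = c * ((r:ℝ) - s + 1) + 0) :
    |cusum σ s t e| ≤ |cusum σ s r e| := by
  have hte : t < e := by omega
  rw [cusum_formula σ s t e hst hte c 0 hAt,
      cusum_formula σ s r e (hst.trans htr) hre c 0 hAr]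
  simp only [zero_div, zero_sub, sub_zero, abs_mul, abs_neg]
  have h := u_mono s e t r hst htr hre
  rw [abs_of_nonneg (Real.sqrt_nonneg _), abs_of_nonneg (Real.sqrt_nonneg _)]
  exact mul_le_mul_of_nonneg_left
    (mul_le_mul_of_nonneg_left h (abs_nonneg _)) (abs_nonneg _)

lemma seg_down (σ : ℕ → ℝ) (s e l t : ℕ) (hsl : s ≤ l) (hlt : l ≤ t) (hte : t < e)
    (c dd : ℝ)
    (hAl : ∑ x ∈ Finset.Icc s l, σ x = c * ((l:ℝ) - s + 1) + dd)
    (hAt : ∑ x ∈ Finset.Icc s t, σ x = c * ((t:ℝ) - s + 1) + dd)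
    (hK : (∑ x ∈ Finset.Icc s e, σ x) - c * ((e:ℝ) - s + 1) - dd = 0) :
    |cusum σ s t e| ≤ |cusum σ s l e| := by
  have hle : l < e := by omega
  rw [cusum_formula σ s t e (hsl.trans hlt) hte c dd hAt,
      cusum_formula σ s l e hsl hle c dd hAl, hK]
  simp only [zero_mul, sub_zero, abs_mul, abs_div]
  have h := u_mono s e l t hsl hlt hte
  have hp := u_pos s e l hsl hle
  rw [abs_of_nonneg (Real.sqrt_nonneg (((t:ℝ) - s + 1) / ((e:ℝ) - t))),
      abs_of_nonneg (Real.sqrt_nonneg (((l:ℝ) - s + 1) / ((e:ℝ) - l)))]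
  exact mul_le_mul_of_nonneg_left
    (div_le_div_of_nonneg_left (abs_nonneg _) hp h) (by positivity)

/-- **CUSUM maximum attained at a breakpoint.**  If `(σ_t)_{t=s}^{e}` is piecewise
constant with breakpoints `s ≤ η_1 < … < η_q < e` (`q ≥ 1`), i.e. constant on `[s, η_1]`,
on each `(η_j, η_{j+1}]` and on `(η_q, e]`, then the maximum of `|S^t_{s,e}|` over
`s < t < e` is attained at one of the breakpoints. -/
theorem cusum_max_at_breakpoint (s e q : ℕ) (η : ℕ → ℕ) (σ : ℕ → ℝ)
    (hq : 1 ≤ q) (hs1 : s ≤ η 1) (hmono : ∀ j, 1 ≤ j → j < q → η j < η (j + 1))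
    (hqe : η q < e)
    (hconst₀ : ∀ t, s ≤ t → t ≤ η 1 → σ t = σ s)
    (hconst : ∀ j, 1 ≤ j → j < q → ∀ t, η j < t → t ≤ η (j + 1) → σ t = σ (η j + 1))
    (hconstq : ∀ t, η q < t → t ≤ e → σ t = σ (η q + 1)) :
    ∃ r, 1 ≤ r ∧ r ≤ q ∧
      ∀ t, s < t → t < e → |cusum σ s t e| ≤ |cusum σ s (η r) e| := by
  -- monotonicity of η on [1, q]
  have hmono' : ∀ j, 1 ≤ j → ∀ k, j ≤ k → k ≤ q → η j ≤ η k := by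
    intro j hj k hjk hkq
    induction k, hjk using Nat.le_induction with
    | base => exact le_rfl
    | succ n hn ih =>
      have h1 : n ≤ q := by omega
      exact (ih h1).trans (le_of_lt (hmono n (by omega) (by omega)))
  have hηje : ∀ j, 1 ≤ j → j ≤ q → η j < e := fun j hj hjq =>
    lt_of_le_of_lt (hmono' j hj q hjq le_rfl) hqe |>.trans_le le_rfl
  have hsηj : ∀ j, 1 ≤ j → j ≤ q → s ≤ η j := fun j hj hjq =>
    hs1.trans (hmono' 1 le_rfl j hj hjq)
  -- argmax over breakpoints
  obtain ⟨r₀, hr₀, hmax⟩ := Finset.exists_max_image (Finset.Icc 1 q)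
    (fun r => |cusum σ s (η r) e|) ⟨1, Finset.mem_Icc.mpr ⟨le_rfl, hq⟩⟩
  obtain ⟨hr₀1, hr₀q⟩ := Finset.mem_Icc.mp hr₀
  refine ⟨r₀, hr₀1, hr₀q, ?_⟩
  intro t hst hte
  -- first segment affine description
  have hA0 : ∀ t', s ≤ t' → t' ≤ η 1 →
      ∑ x ∈ Finset.Icc s t', σ x = σ s * ((t':ℝ) - s + 1) + 0 := by
    intro t' h1 h2
    rw [sum_icc_split σ s s t' le_rfl h1,
        sum_icc_const (σ s) σ s t' h1 (fun x hx1 hx2 => hconst₀ x (by omega) (by omega)),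
        Finset.Icc_self, Finset.sum_singleton]
    ring
  rcases le_or_gt t (η 1) with h1 | h1
  · -- t in first segment
    have h1e : η 1 < e := hηje 1 le_rfl hq
    have key := seg_up σ s e (η 1) t (le_of_lt hst) h1 h1e (σ s)
      (hA0 t (le_of_lt hst) h1) (hA0 (η 1) hs1 le_rfl)
    exact key.trans (hmax 1 (Finset.mem_Icc.mpr ⟨le_rfl, hq⟩))
  · rcases lt_or_ge (η q) t with h2 | h2
    · -- t in last segment
      have hsq : s ≤ η q := hsηj q hq le_rfl
      have hAq : ∀ t', η q ≤ t' → t' ≤ e →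
          ∑ x ∈ Finset.Icc s t', σ x
            = σ (η q + 1) * ((t':ℝ) - s + 1)
              + ((∑ x ∈ Finset.Icc s e, σ x) - σ (η q + 1) * ((e:ℝ) - s + 1)) := by
        intro t' ha hb
        have hsp := sum_icc_split σ s t' e (hsq.trans ha) hb
        have hcn := sum_icc_const (σ (η q + 1)) σ t' e hb
          (fun x hx1 hx2 => hconstq x (by omega) hx2)
        rw [hcn] at hsp
        have h3 : ∑ x ∈ Finset.Icc s t', σ x
            = (∑ x ∈ Finset.Icc s e, σ x) - σ (η q + 1) * ((e:ℝ) - t') := by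
          linarith
        rw [h3]; ring
      have key := seg_down σ s e (η q) t hsq (le_of_lt h2) hte (σ (η q + 1)) _
        (hAq (η q) le_rfl (le_of_lt hqe)) (hAq t (le_of_lt h2) (le_of_lt hte))
        (by ring)
      exact key.trans (hmax q (Finset.mem_Icc.mpr ⟨hq, le_rfl⟩))
    · -- middle segment: η 1 < t ≤ η q
      set F := (Finset.Icc 1 q).filter (fun j => η j < t) with hF
      have hFne : F.Nonempty :=
        ⟨1, Finset.mem_filter.mpr ⟨Finset.mem_Icc.mpr ⟨le_rfl, hq⟩, h1⟩⟩
      set j := F.max' hFne with hj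
      have hjF := F.max'_mem hFne
      rw [Finset.mem_filter, Finset.mem_Icc] at hjF
      obtain ⟨⟨hj1, hjq⟩, hjt⟩ := hjF
      have hjltq : j < q := by
        rcases lt_or_eq_of_le hjq with h | h
        · exact h
        · exfalso; rw [h] at hjt; omega
      have hnext : t ≤ η (j + 1) := by
        by_contra h
        push_neg at h
        have : j + 1 ∈ F := Finset.mem_filter.mpr
          ⟨Finset.mem_Icc.mpr ⟨by omega, by omega⟩, h⟩
        have := Finset.le_max' F (j + 1) this
        omega
      have hsj : s ≤ η j := hsηj j hj1 (le_of_lt hjltq)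
      have hj1e : η (j + 1) < e := hηje (j + 1) (by omega) (by omega)
      have hAj : ∀ t', η j ≤ t' → t' ≤ η (j + 1) →
          ∑ x ∈ Finset.Icc s t', σ x
            = σ (η j + 1) * ((t':ℝ) - s + 1)
              + ((∑ x ∈ Finset.Icc s (η j), σ x)
                  - σ (η j + 1) * ((η j : ℝ) - s + 1)) := by
        intro t' ha hb
        rw [sum_icc_split σ s (η j) t' hsj ha,
            sum_icc_const (σ (η j + 1)) σ (η j) t' ha
              (fun x hx1 hx2 => hconst j hj1 hjltq x hx1 (hx2.trans hb))]
        ring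
      have key := seg_bound σ s e (η j) (η (j + 1)) t hsj (le_of_lt hjt) hnext hj1e
        (σ (η j + 1)) _
        (hAj (η j) le_rfl (le_of_lt (hmono j hj1 hjltq)))
        (hAj t (le_of_lt hjt) hnext)
        (hAj (η (j + 1)) (le_of_lt (hmono j hj1 hjltq)) le_rfl)
      refine key.trans (max_le ?_ ?_)
      · exact hmax j (Finset.mem_Icc.mpr ⟨hj1, hjq⟩)
      · exact hmax (j + 1) (Finset.mem_Icc.mpr ⟨by omega, by omega⟩)
end

section
/- Bernstein-type concentration for weighted centered chi-squares: There exists an absolute constant C₀ > 0 such that for every n ≥ 1, every λ = (λ_1,…,λ_n) ∈ ℝⁿ, every x ≥ 0, and independent standard normal random variables U_1,…,U_n: P( |Σ_{i=1}^{n} λ_i (U_i² − 1)| ≥ x ) ≤ 2 exp( − x² / ( C₀ ( Σ_{i=1}^{n} λ_i² + max_i |λ_i| · x ) ) ). -/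
open MeasureTheory ProbabilityTheory Real
open scoped ENNReal NNReal



lemma aux_exp_bound {s : ℝ} (hs : |s| ≤ 2/5) : Real.exp (-s - s^2) ≤ 1 - s := by
  rw [abs_le] at hs
  have hkey : Real.exp (-s - s^2) = (Real.exp (s + s^2))⁻¹ := by
    rw [← Real.exp_neg]; ring_nf
  rcases le_or_gt s 0 with h | h
  · have h1 : (0:ℝ) < 1 + (s + s^2) := by nlinarith
    have h2 := Real.add_one_le_exp (s + s^2)
    rw [hkey]
    calc (Real.exp (s + s^2))⁻¹ ≤ (1 + (s + s^2))⁻¹ := by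
          apply inv_anti₀ h1; linarith
      _ = 1 / (1 + (s + s^2)) := by rw [one_div]
      _ ≤ 1 - s := by rw [div_le_iff₀ h1]; nlinarith
  · have ha : (0:ℝ) ≤ s + s^2 := by nlinarith
    have h2 := Real.quadratic_le_exp_of_nonneg ha
    have h1 : (0:ℝ) < 1 + (s + s^2) + (s + s^2)^2/2 := by nlinarith
    rw [hkey]
    calc (Real.exp (s + s^2))⁻¹ ≤ (1 + (s + s^2) + (s + s^2)^2/2)⁻¹ := by
          apply inv_anti₀ h1; linarith
      _ = 1 / (1 + (s + s^2) + (s + s^2)^2/2) := by rw [one_div]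
      _ ≤ 1 - s := by rw [div_le_iff₀ h1]; nlinarith [sq_nonneg s, sq_nonneg (s*(1-s)), sq_nonneg (s*s)]

lemma aux_pdf_eq (c : ℝ) : (fun u : ℝ => gaussianPDFReal 0 1 u * Real.exp (c * (u^2 - 1)))
    = fun u : ℝ => ((Real.sqrt (2*π))⁻¹ * Real.exp (-c)) * Real.exp (-(1/2 - c) * u^2) := by
  funext u
  simp only [gaussianPDFReal, NNReal.coe_one, mul_one, sub_zero]
  rw [mul_assoc, mul_assoc, ← Real.exp_add, ← Real.exp_add]
  ring_nf

lemma aux_gauss_int {c : ℝ} (hc : |c| ≤ 1/5) :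
    Integrable (fun u => Real.exp (c * (u^2 - 1))) (gaussianReal 0 1) ∧
    ∫ u, Real.exp (c * (u^2 - 1)) ∂(gaussianReal 0 1) ≤ Real.exp (2 * c^2) := by
  rw [abs_le] at hc
  have hb : (0:ℝ) < 1/2 - c := by linarith
  have hγ : gaussianReal 0 1 = volume.withDensity (fun u => ((gaussianPDFReal 0 1 u).toNNReal : ℝ≥0∞)) := by
    rw [gaussianReal_of_var_ne_zero 0 one_ne_zero]; rfl
  have hfme : Measurable (fun u : ℝ => (gaussianPDFReal 0 1 u).toNNReal) :=
    (measurable_gaussianPDFReal 0 1).real_toNNReal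
  have hsmul : ∀ u : ℝ, (gaussianPDFReal 0 1 u).toNNReal • Real.exp (c * (u^2 - 1))
      = gaussianPDFReal 0 1 u * Real.exp (c * (u^2 - 1)) := by
    intro u
    rw [NNReal.smul_def, smul_eq_mul, Real.coe_toNNReal _ (gaussianPDFReal_nonneg 0 1 u)]
  have hint2 : Integrable (fun u : ℝ => ((Real.sqrt (2*π))⁻¹ * Real.exp (-c)) * Real.exp (-(1/2 - c) * u^2)) volume :=
    (integrable_exp_neg_mul_sq hb).const_mul _
  constructor
  · rw [hγ, integrable_withDensity_iff_integrable_smul hfme]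
    simpa only [hsmul, aux_pdf_eq c] using hint2
  · rw [hγ, integral_withDensity_eq_integral_smul hfme]
    simp only [hsmul]
    rw [aux_pdf_eq c, integral_const_mul, integral_gaussian]
    -- now: (√(2π))⁻¹ * exp (-c) * √(π/(1/2-c)) ≤ exp (2c²)
    have hπ : (0:ℝ) < π := pi_pos
    have h1 : Real.sqrt (π / (1/2 - c)) = Real.sqrt π / Real.sqrt (1/2 - c) :=
      Real.sqrt_div hπ.le _
    have h2 : Real.sqrt (2*π) = Real.sqrt 2 * Real.sqrt π := Real.sqrt_mul (by norm_num) _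
    have hsp : (0:ℝ) < Real.sqrt π := Real.sqrt_pos.2 hπ
    have hs2 : (0:ℝ) < Real.sqrt 2 := Real.sqrt_pos.2 (by norm_num)
    have hsb : (0:ℝ) < Real.sqrt (1/2 - c) := Real.sqrt_pos.2 hb
    have h3 : (Real.sqrt (2*π))⁻¹ * Real.exp (-c) * Real.sqrt (π / (1/2 - c))
        = Real.exp (-c) / Real.sqrt (1 - 2*c) := by
      have h4 : Real.sqrt (1 - 2*c) = Real.sqrt 2 * Real.sqrt (1/2 - c) := by
        rw [← Real.sqrt_mul (by norm_num : (0:ℝ) ≤ 2)]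
        congr 1; ring
      rw [h1, h2, h4]
      have hsb1 : (0:ℝ) < Real.sqrt (1 - 2*c) := by rw [h4]; positivity
      field_simp
    have hsb1 : (0:ℝ) < Real.sqrt (1 - 2*c) := Real.sqrt_pos.2 (by linarith)
    rw [h3, div_le_iff₀ hsb1]
    have h5 : Real.exp (-c) = Real.exp (2*c^2) * Real.exp (-c - 2*c^2) := by
      rw [← Real.exp_add]; ring_nf
    rw [h5]
    have h6 : Real.exp (-c - 2*c^2) ≤ Real.sqrt (1 - 2*c) := by
      have h7 : Real.exp (-c - 2*c^2) = Real.sqrt (Real.exp (-(2*c) - (2*c)^2)) := by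
        rw [← Real.exp_half]; ring_nf
      rw [h7]
      apply Real.sqrt_le_sqrt
      have := aux_exp_bound (s := 2*c) (by rw [abs_le]; constructor <;> linarith)
      linarith
    calc Real.exp (2*c^2) * Real.exp (-c - 2*c^2) ≤ Real.exp (2*c^2) * Real.sqrt (1 - 2*c) := by
          apply mul_le_mul_of_nonneg_left h6 (Real.exp_nonneg _)
      _ = Real.exp (2*c^2) * Real.sqrt (1 - 2*c) := rfl


lemma aux_iIndepFun_congr {Ω ι : Type*} {mΩ : MeasurableSpace Ω} {μ : Measure Ω}
    {f g : ι → Ω → ℝ} (h : iIndepFun f μ)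
    (h' : ∀ i, f i =ᵐ[μ] g i) : iIndepFun g μ := by
  rw [iIndepFun_iff_measure_inter_preimage_eq_mul] at h ⊢
  intro S sets hsets
  have hall : ∀ᵐ ω ∂μ, ∀ i ∈ S, f i ω = g i ω :=
    (Filter.eventually_all_finset S).2 fun i _ => h' i
  have h1 : ∀ i ∈ S, μ (g i ⁻¹' sets i) = μ (f i ⁻¹' sets i) := by
    intro i hi
    apply measure_congr
    filter_upwards [h' i] with ω hω
    show (g i ω ∈ sets i) = (f i ω ∈ sets i)
    rw [hω]
  have h2 : μ (⋂ i ∈ S, g i ⁻¹' sets i) = μ (⋂ i ∈ S, f i ⁻¹' sets i) := by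
    apply measure_congr
    filter_upwards [hall] with ω hω
    show (ω ∈ ⋂ i ∈ S, g i ⁻¹' sets i) = (ω ∈ ⋂ i ∈ S, f i ⁻¹' sets i)
    simp only [Set.mem_iInter, Set.mem_preimage, eq_iff_iff]
    exact ⟨fun hh i hi => (hω i hi) ▸ hh i hi, fun hh i hi => (hω i hi).symm ▸ hh i hi⟩
  rw [h2, h (S := S) hsets]
  exact (Finset.prod_congr rfl h1).symm

lemma aux_one_sided {Ω : Type} {mΩ : MeasurableSpace Ω} {μ : Measure Ω}
    [IsProbabilityMeasure μ] {n : ℕ} {V : Fin (n+1) → Ω → ℝ}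
    (hmeas : ∀ i, Measurable (V i))
    (hind : iIndepFun V μ)
    (hmap : ∀ i, Measure.map (V i) μ = gaussianReal 0 1)
    (l : Fin (n+1) → ℝ) {x B : ℝ} (hx : 0 < x) (hB : 0 < B)
    (hlB : ∀ i, |l i| ≤ B) :
    (μ {ω | x ≤ ∑ i, l i * ((V i ω)^2 - 1)}).toReal
      ≤ Real.exp (-(x^2) / (9 * ((∑ i, (l i)^2) + B * x))) := by
  set σ2 := ∑ i, (l i)^2 with hσ2
  have hσ2nn : 0 ≤ σ2 := Finset.sum_nonneg fun i _ => sq_nonneg _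
  set D := σ2 + B * x with hD
  have hDpos : 0 < D := by rw [hD]; nlinarith
  have hσ2leD : σ2 ≤ D := by rw [hD]; nlinarith
  set t := x / (5 * D) with ht
  have htpos : 0 < t := by rw [ht]; positivity
  set X : Fin (n+1) → Ω → ℝ := fun i ω => l i * ((V i ω)^2 - 1) with hX
  have hXmeas : ∀ i, Measurable (X i) :=
    fun i => (((hmeas i).pow_const 2).sub_const 1).const_mul _
  have hXind : iIndepFun X μ :=
    hind.comp (fun i u => l i * (u^2 - 1))
      (fun i => ((measurable_id.pow_const 2).sub_const 1).const_mul _)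
  have hc : ∀ i, |t * l i| ≤ 1/5 := by
    intro i
    rw [abs_mul, abs_of_pos htpos]
    have h1 : t * |l i| ≤ t * B := by
      apply mul_le_mul_of_nonneg_left (hlB i) htpos.le
    refine h1.trans ?_
    rw [ht, div_mul_eq_mul_div, div_le_iff₀ (by positivity)]
    nlinarith
  have hkey : ∀ i : Fin (n+1), Integrable (fun ω => Real.exp (t * X i ω)) μ ∧
      mgf (X i) μ t ≤ Real.exp (2 * (t * l i)^2) := by
    intro i
    obtain ⟨hint, hle⟩ := aux_gauss_int (hc i)
    have hVae : AEMeasurable (V i) μ := (hmeas i).aemeasurable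
    have hcont : Continuous (fun u : ℝ => Real.exp ((t * l i) * (u^2 - 1))) := by fun_prop
    have hcomp : (fun ω => Real.exp (t * X i ω))
        = (fun u => Real.exp ((t * l i) * (u^2 - 1))) ∘ (V i) := by
      funext ω; simp only [hX, Function.comp_apply]; ring_nf
    have hintμ : Integrable (fun ω => Real.exp (t * X i ω)) μ := by
      rw [hcomp, ← integrable_map_measure (by rw [hmap i]; exact hcont.aestronglyMeasurable) hVae]
      rw [hmap i]; exact hint
    refine ⟨hintμ, ?_⟩
    rw [mgf]
    calc ∫ ω, Real.exp (t * X i ω) ∂μ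
        = ∫ u, Real.exp ((t * l i) * (u^2 - 1)) ∂(Measure.map (V i) μ) := by
          rw [integral_map hVae (by rw [hmap i]; exact hcont.aestronglyMeasurable)]
          rw [hcomp]; rfl
      _ = ∫ u, Real.exp ((t * l i) * (u^2 - 1)) ∂(gaussianReal 0 1) := by rw [hmap i]
      _ ≤ Real.exp (2 * (t * l i)^2) := hle
  have hintS : Integrable (fun ω => Real.exp (t * (∑ i, X i) ω)) μ :=
    hXind.integrable_exp_mul_sum hXmeas (fun i _ => (hkey i).1)
  have hmgfS : mgf (∑ i, X i) μ t ≤ Real.exp (2 * t^2 * σ2) := by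
    rw [hXind.mgf_sum hXmeas]
    calc ∏ i, mgf (X i) μ t ≤ ∏ i, Real.exp (2 * (t * l i)^2) :=
          Finset.prod_le_prod (fun i _ => mgf_nonneg) (fun i _ => (hkey i).2)
      _ = Real.exp (∑ i, 2 * (t * l i)^2) := by rw [Real.exp_sum]
      _ = Real.exp (2 * t^2 * σ2) := by
          congr 1; rw [hσ2, Finset.mul_sum]
          exact Finset.sum_congr rfl fun i _ => by ring
  have hcher := measure_ge_le_exp_mul_mgf (X := ∑ i, X i) (μ := μ) (t := t) x htpos.le hintS
  have harith : Real.exp (-t * x) * Real.exp (2 * t^2 * σ2)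
      ≤ Real.exp (-(x^2) / (9 * D)) := by
    rw [← Real.exp_add, Real.exp_le_exp]
    have htD : x = 5 * D * t := by rw [ht]; field_simp
    rw [← mul_le_mul_iff_of_pos_right (show (0:ℝ) < 9 * D by positivity)]
    rw [div_mul_cancel₀ _ (by positivity : (9:ℝ) * D ≠ 0)]
    rw [htD]
    nlinarith [mul_nonneg (sub_nonneg.2 hσ2leD) (mul_nonneg (sq_nonneg t) hDpos.le)]
  have hfin : (μ {ω | x ≤ (∑ i, X i) ω}).toReal ≤ Real.exp (-(x^2) / (9 * D)) := by
    refine hcher.trans ?_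
    exact (mul_le_mul_of_nonneg_left hmgfS (Real.exp_nonneg _)).trans harith
  have hseteq : {ω | x ≤ ∑ i, l i * ((V i ω)^2 - 1)} = {ω | x ≤ (∑ i, X i) ω} := by
    ext ω; simp [hX]
  rw [hseteq]
  exact hfin

/-- **Bernstein-type concentration for weighted centered chi-squares.** -/
theorem bernstein_weighted_chisq :
    ∃ C₀ : ℝ, 0 < C₀ ∧
      ∀ (Ω : Type) (mΩ : MeasurableSpace Ω) (μ : Measure Ω), IsProbabilityMeasure μ →
        ∀ (n : ℕ) (U : Fin (n + 1) → Ω → ℝ),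
          iIndepFun U μ →
          (∀ i, Measure.map (U i) μ = gaussianReal 0 1) →
          ∀ (l : Fin (n + 1) → ℝ) (x : ℝ), 0 ≤ x →
            μ {ω | x ≤ |∑ i, l i * ((U i ω) ^ 2 - 1)|} ≤
              ENNReal.ofReal (2 * Real.exp (-(x ^ 2) /
                (C₀ * (∑ i, (l i) ^ 2 + (⨆ i, |l i|) * x)))) := by
  refine ⟨9, by norm_num, ?_⟩
  intro Ω mΩ μ hprob n U hind hmap l x hx
  rcases hx.eq_or_lt with hx0 | hxpos
  · -- x = 0
    subst hx0
    have h1 : μ {ω | (0:ℝ) ≤ |∑ i, l i * ((U i ω) ^ 2 - 1)|} ≤ 1 := prob_le_one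
    refine h1.trans ?_
    rw [show -(0:ℝ)^2 / (9 * (∑ i, (l i)^2 + (⨆ i, |l i|) * 0)) = 0 by norm_num,
      Real.exp_zero, mul_one, ENNReal.one_le_ofReal]
    norm_num
  -- x > 0
  set B := ⨆ i, |l i| with hBdef
  have hBspec : ∀ i, |l i| ≤ B :=
    fun i => hBdef ▸ le_ciSup (f := fun j => |l j|) (Set.Finite.bddAbove (Set.finite_range _)) i
  have hBnn : 0 ≤ B := le_trans (abs_nonneg (l 0)) (hBspec 0)
  rcases hBnn.eq_or_lt with hB0 | hBpos
  · -- B = 0 : all weights vanish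
    have hall : ∀ i, l i = 0 := fun i =>
      abs_eq_zero.1 (le_antisymm (hB0 ▸ hBspec i) (abs_nonneg _))
    have hempty : {ω | x ≤ |∑ i, l i * ((U i ω) ^ 2 - 1)|} = (∅ : Set Ω) := by
      ext ω; simp [hall, not_le, hxpos]
    rw [hempty]
    simp
  -- main case : x > 0, B > 0
  have hUae : ∀ i, AEMeasurable (U i) μ := by
    intro i
    by_contra h
    have := hmap i
    rw [Measure.map_of_not_aemeasurable h] at this
    have h1 : (gaussianReal 0 1) Set.univ = 1 := measure_univ
    rw [← this] at h1
    simp at h1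
  set V : Fin (n+1) → Ω → ℝ := fun i => (hUae i).mk (U i) with hVdef
  have hVmeas : ∀ i, Measurable (V i) := fun i => (hUae i).measurable_mk
  have hUV : ∀ i, U i =ᵐ[μ] V i := fun i => (hUae i).ae_eq_mk
  have hmapV : ∀ i, Measure.map (V i) μ = gaussianReal 0 1 := by
    intro i; rw [← Measure.map_congr (hUV i)]; exact hmap i
  have hindV : iIndepFun V μ := aux_iIndepFun_congr hind hUV
  -- replace U by V in the event
  have hae : ∀ᵐ ω ∂μ, ∀ i, U i ω = V i ω := by
    rw [MeasureTheory.ae_all_iff]; exact hUV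
  have hsetae : μ {ω | x ≤ |∑ i, l i * ((U i ω) ^ 2 - 1)|}
      = μ {ω | x ≤ |∑ i, l i * ((V i ω) ^ 2 - 1)|} := by
    apply measure_congr
    filter_upwards [hae] with ω hω
    show (x ≤ |∑ i, l i * ((U i ω) ^ 2 - 1)|) = (x ≤ |∑ i, l i * ((V i ω) ^ 2 - 1)|)
    congr 2
    exact Finset.sum_congr rfl fun i _ => by rw [hω i]
  rw [hsetae]
  -- split the two tails
  set S : Ω → ℝ := fun ω => ∑ i, l i * ((V i ω) ^ 2 - 1) with hSdef
  have hsub : {ω | x ≤ |S ω|} ⊆ {ω | x ≤ S ω} ∪ {ω | x ≤ -S ω} := by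
    intro ω hω
    simp only [Set.mem_setOf_eq] at hω
    rcases abs_cases (S ω) with ⟨h1, _⟩ | ⟨h1, _⟩
    · left; exact Set.mem_setOf_eq ▸ (h1 ▸ hω)
    · right; exact Set.mem_setOf_eq ▸ (h1 ▸ hω)
  set e := Real.exp (-(x ^ 2) / (9 * (∑ i, (l i) ^ 2 + B * x))) with hedef
  have hbound1 : μ {ω | x ≤ S ω} ≤ ENNReal.ofReal e := by
    have := aux_one_sided hVmeas hindV hmapV l hxpos hBpos hBspec
    rw [← ENNReal.ofReal_toReal (measure_ne_top μ {ω | x ≤ S ω})]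
    exact ENNReal.ofReal_le_ofReal this
  have hbound2 : μ {ω | x ≤ -S ω} ≤ ENNReal.ofReal e := by
    have hneg : {ω | x ≤ -S ω} = {ω | x ≤ ∑ i, (-l i) * ((V i ω) ^ 2 - 1)} := by
      ext ω
      simp only [Set.mem_setOf_eq, hSdef, ← Finset.sum_neg_distrib, neg_mul]
    have hB' : ∀ i, |(-l i)| ≤ B := fun i => (abs_neg (l i)) ▸ hBspec i
    have := aux_one_sided hVmeas hindV hmapV (fun i => -l i) hxpos hBpos hB'
    have hsq : ∀ i, (-l i)^2 = (l i)^2 := fun i => neg_sq (l i)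
    rw [hneg, ← ENNReal.ofReal_toReal (measure_ne_top μ _)]
    apply ENNReal.ofReal_le_ofReal
    refine this.trans ?_
    apply le_of_eq
    have hsum : ∑ i, (fun i => -l i) i ^ 2 = ∑ i, (l i) ^ 2 := by
      simp
    rw [hsum, ← hedef]
  calc μ {ω | x ≤ |S ω|} ≤ μ ({ω | x ≤ S ω} ∪ {ω | x ≤ -S ω}) := measure_mono hsub
    _ ≤ μ {ω | x ≤ S ω} + μ {ω | x ≤ -S ω} := measure_union_le _ _
    _ ≤ ENNReal.ofReal e + ENNReal.ofReal e := add_le_add hbound1 hbound2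
    _ = ENNReal.ofReal (2 * e) := by
        rw [← ENNReal.ofReal_add (Real.exp_nonneg _) (Real.exp_nonneg _), two_mul]
    _ = ENNReal.ofReal (2 * Real.exp (-(x ^ 2) /
        (9 * (∑ i, (l i) ^ 2 + B * x)))) := rfl
end

section
/- Trace bound for products with a banded-dominated matrix: Let n ≥ 1, let ρ : ℕ → [0, ∞), and let V, W be n×n real matrices such that |V_{ij}| ≤ ρ(|i − j|) for all i, j, and W is diagonal with |W_{ii}| ≤ K for all i. Then trace((VW)²) ≤ n K² ρ²_∞, where ρ²_∞ = ρ(0)² + 2 Σ_{τ=1}^{∞} ρ(τ)² (assumed finite). -/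
/-- **Trace bound for products with a banded-dominated matrix.**  If `|V_{ij}| ≤ ρ(|i−j|)`
and `W` is diagonal with `|W_{ii}| ≤ K`, then
`trace((VW)²) ≤ n·K²·ρ²_∞`, where `ρ²_∞ = ρ(0)² + 2·Σ_{τ≥1} ρ(τ)²` (assumed finite). -/
theorem trace_bound_banded (n : ℕ) (hn : 1 ≤ n) (ρ : ℕ → ℝ) (hρ : ∀ τ, 0 ≤ ρ τ)
    (hsum : Summable fun τ => (ρ τ) ^ 2)
    (V W : Matrix (Fin n) (Fin n) ℝ) (K : ℝ)
    (hV : ∀ i j, |V i j| ≤ ρ (Nat.dist (i : ℕ) (j : ℕ)))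
    (hWdiag : ∀ i j, i ≠ j → W i j = 0)
    (hWK : ∀ i, |W i i| ≤ K) :
    Matrix.trace ((V * W) ^ 2) ≤
      (n : ℝ) * K ^ 2 * ((ρ 0) ^ 2 + 2 * ∑' τ : ℕ, (ρ (τ + 1)) ^ 2) := by
  have hsum' : Summable fun τ : ℕ => ρ (τ + 1) ^ 2 :=
    hsum.comp_injective (add_left_injective 1)
  -- per-row bound via injective image into ℕ
  have himg : ∀ (i : Fin n) (S : Finset (Fin n)) (e : Fin n → ℕ),
      (∀ j ∈ S, ∀ k ∈ S, e j = e k → j = k) →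
      (∀ j ∈ S, Nat.dist (i : ℕ) (j : ℕ) = e j + 1) →
      ∑ j ∈ S, ρ (Nat.dist (i : ℕ) (j : ℕ)) ^ 2 ≤ ∑' τ : ℕ, ρ (τ + 1) ^ 2 := by
    intro i S e hinj hd
    calc ∑ j ∈ S, ρ (Nat.dist (i : ℕ) (j : ℕ)) ^ 2
        = ∑ j ∈ S, ρ (e j + 1) ^ 2 :=
          Finset.sum_congr rfl (fun j hj => by rw [hd j hj])
      _ = ∑ τ ∈ S.image e, ρ (τ + 1) ^ 2 := by rw [Finset.sum_image hinj]
      _ ≤ ∑' τ : ℕ, ρ (τ + 1) ^ 2 :=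
          Summable.sum_le_tsum _ (fun τ _ => sq_nonneg _) hsum'
  have key : ∀ i : Fin n, ∑ j : Fin n, ρ (Nat.dist (i : ℕ) (j : ℕ)) ^ 2 ≤
      ρ 0 ^ 2 + 2 * ∑' τ : ℕ, ρ (τ + 1) ^ 2 := by
    intro i
    have hiu : i ∈ (Finset.univ : Finset (Fin n)) := Finset.mem_univ i
    rw [← Finset.sum_erase_add _ _ hiu]
    have hsplit := Finset.sum_filter_add_sum_filter_not
      ((Finset.univ : Finset (Fin n)).erase i) (fun j => (j : ℕ) < (i : ℕ))
      (fun j => ρ (Nat.dist (i : ℕ) (j : ℕ)) ^ 2)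
    rw [← hsplit]
    have hA : ∑ j ∈ ((Finset.univ : Finset (Fin n)).erase i).filter
        (fun j : Fin n => (j : ℕ) < (i : ℕ)), ρ (Nat.dist (i : ℕ) (j : ℕ)) ^ 2 ≤
        ∑' τ : ℕ, ρ (τ + 1) ^ 2 := by
      refine himg i _ (fun j => (i : ℕ) - (j : ℕ) - 1) ?_ ?_
      · intro j hj k hk hjk
        simp only [Finset.mem_filter, Finset.mem_erase] at hj hk
        have : (j : ℕ) = (k : ℕ) := by omega
        exact Fin.ext this
      · intro j hj
        simp only [Finset.mem_filter, Finset.mem_erase] at hj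
        show Nat.dist (i : ℕ) (j : ℕ) = (i : ℕ) - (j : ℕ) - 1 + 1
        unfold Nat.dist
        omega
    have hB : ∑ j ∈ ((Finset.univ : Finset (Fin n)).erase i).filter
        (fun j : Fin n => ¬ (j : ℕ) < (i : ℕ)), ρ (Nat.dist (i : ℕ) (j : ℕ)) ^ 2 ≤
        ∑' τ : ℕ, ρ (τ + 1) ^ 2 := by
      refine himg i _ (fun j => (j : ℕ) - (i : ℕ) - 1) ?_ ?_
      · intro j hj k hk hjk
        simp only [Finset.mem_filter, Finset.mem_erase] at hj hk
        have hji : (j : ℕ) ≠ (i : ℕ) := fun h => hj.1.1 (Fin.ext h)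
        have hki : (k : ℕ) ≠ (i : ℕ) := fun h => hk.1.1 (Fin.ext h)
        have : (j : ℕ) = (k : ℕ) := by omega
        exact Fin.ext this
      · intro j hj
        simp only [Finset.mem_filter, Finset.mem_erase] at hj
        have hji : (j : ℕ) ≠ (i : ℕ) := fun h => hj.1.1 (Fin.ext h)
        show Nat.dist (i : ℕ) (j : ℕ) = (j : ℕ) - (i : ℕ) - 1 + 1
        unfold Nat.dist
        omega
    have hdi : Nat.dist (i : ℕ) (i : ℕ) = 0 := Nat.dist_self _
    rw [hdi]
    linarith
  -- diagonal multiplication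
  have hVW : ∀ i j, (V * W) i j = V i j * W j j := by
    intro i j
    rw [Matrix.mul_apply]
    exact Finset.sum_eq_single j (fun k _ hk => by rw [hWdiag k j hk, mul_zero])
      (fun h => absurd (Finset.mem_univ j) h)
  have hK0 : 0 ≤ K := le_trans (abs_nonneg _) (hWK ⟨0, hn⟩)
  have htr : Matrix.trace ((V * W) ^ 2) =
      ∑ i : Fin n, ∑ j : Fin n, (V i j * W j j) * (V j i * W i i) := by
    rw [pow_two, Matrix.trace]
    refine Finset.sum_congr rfl (fun i _ => ?_)
    rw [Matrix.diag_apply, Matrix.mul_apply]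
    exact Finset.sum_congr rfl (fun j _ => by rw [hVW, hVW])
  rw [htr]
  have hterm : ∀ i j : Fin n, (V i j * W j j) * (V j i * W i i) ≤
      ρ (Nat.dist (i : ℕ) (j : ℕ)) ^ 2 * K ^ 2 := by
    intro i j
    have h1 : |V j i| ≤ ρ (Nat.dist (i : ℕ) (j : ℕ)) := by
      rw [Nat.dist_comm]; exact hV j i
    calc (V i j * W j j) * (V j i * W i i) ≤ |(V i j * W j j) * (V j i * W i i)| :=
          le_abs_self _
      _ = |V i j| * |W j j| * (|V j i| * |W i i|) := by
          rw [abs_mul, abs_mul, abs_mul]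
      _ ≤ ρ (Nat.dist (i : ℕ) (j : ℕ)) * K * (ρ (Nat.dist (i : ℕ) (j : ℕ)) * K) := by
          exact mul_le_mul (mul_le_mul (hV i j) (hWK j) (abs_nonneg _) (hρ _))
            (mul_le_mul h1 (hWK i) (abs_nonneg _) (hρ _))
            (mul_nonneg (abs_nonneg _) (abs_nonneg _)) (mul_nonneg (hρ _) hK0)
      _ = ρ (Nat.dist (i : ℕ) (j : ℕ)) ^ 2 * K ^ 2 := by ring
  calc ∑ i : Fin n, ∑ j : Fin n, (V i j * W j j) * (V j i * W i i)
      ≤ ∑ i : Fin n, ∑ j : Fin n, ρ (Nat.dist (i : ℕ) (j : ℕ)) ^ 2 * K ^ 2 :=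
        Finset.sum_le_sum (fun i _ => Finset.sum_le_sum (fun j _ => hterm i j))
    _ = (∑ i : Fin n, ∑ j : Fin n, ρ (Nat.dist (i : ℕ) (j : ℕ)) ^ 2) * K ^ 2 := by
        rw [Finset.sum_mul]
        exact Finset.sum_congr rfl (fun i _ => (Finset.sum_mul _ _ _).symm)
    _ ≤ (∑ _i : Fin n, (ρ 0 ^ 2 + 2 * ∑' τ : ℕ, ρ (τ + 1) ^ 2)) * K ^ 2 :=
        mul_le_mul_of_nonneg_right (Finset.sum_le_sum (fun i _ => key i)) (sq_nonneg K)
    _ = (n : ℝ) * K ^ 2 * ((ρ 0) ^ 2 + 2 * ∑' τ : ℕ, (ρ (τ + 1)) ^ 2) := by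
        simp [Finset.sum_const, nsmul_eq_mul]; ring
end

section
/- Variance bound for weighted sums of squares of correlated standard Gaussians: Let (Z_1,…,Z_n) be a centered jointly Gaussian vector with Var(Z_t) = 1 for all t and |Cov(Z_s, Z_t)| ≤ ρ(|s − t|) for a function ρ : ℕ → [0, ∞) with ρ²_∞ = ρ(0)² + 2Σ_{τ≥1}ρ(τ)² < ∞. Then for any real coefficients a_1,…,a_n with max_t |a_t| ≤ A: Var( n^{−1/2} Σ_{t=1}^{n} a_t Z_t² ) ≤ 2 A² ρ²_∞. -/
open MeasureTheory ProbabilityTheory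

section AuxGauss
open Real Set
open scoped ENNReal NNReal

private lemma integrable_pow_mul_gauss' {b : ℝ} (hb : 0 < b) (k : ℕ) :
    Integrable fun x : ℝ => x ^ k * rexp (-b * x ^ 2) := by
  have h := integrable_rpow_mul_exp_neg_mul_sq hb (s := (k : ℝ))
    (by linarith [Nat.cast_nonneg (α := ℝ) k])
  simp_rw [Real.rpow_natCast] at h
  exact h

private lemma integral_pow_mul_gauss_Ioi' {b : ℝ} (hb : 0 < b) (k : ℕ) :
    ∫ x in Ioi (0:ℝ), x ^ k * rexp (-b * x ^ 2) =
      b ^ (-((k:ℝ) + 1) / 2) * (1 / 2) * Gamma (((k:ℝ) + 1) / 2) := by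
  rw [← integral_rpow_mul_exp_neg_mul_rpow (p := 2) (q := (k:ℝ)) two_pos
    (by linarith [Nat.cast_nonneg (α := ℝ) k]) hb]
  refine setIntegral_congr_fun measurableSet_Ioi (fun x hx => ?_)
  rw [Real.rpow_natCast, Real.rpow_two]

private lemma integral_even_pow_mul_gauss' {b : ℝ} (hb : 0 < b) (k : ℕ) :
    ∫ x : ℝ, x ^ (2 * k) * rexp (-b * x ^ 2) =
      b ^ (-(2 * (k:ℝ) + 1) / 2) * Gamma ((2 * (k:ℝ) + 1) / 2) := by
  calc ∫ x : ℝ, x ^ (2 * k) * rexp (-b * x ^ 2)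
      = ∫ x : ℝ, (fun y : ℝ => y ^ (2 * k) * rexp (-b * y ^ 2)) |x| := by
        congr 1; ext x; simp only [pow_mul, sq_abs]
    _ = 2 * ∫ x in Ioi (0:ℝ), x ^ (2 * k) * rexp (-b * x ^ 2) :=
        integral_comp_abs (f := fun y : ℝ => y ^ (2 * k) * rexp (-b * y ^ 2))
    _ = _ := by
        rw [integral_pow_mul_gauss_Ioi' hb]
        push_cast
        ring_nf

private lemma gamma_three_halves' : Gamma ((3:ℝ) / 2) = Real.sqrt π / 2 := by
  have h : ((3:ℝ)/2) = 1/2 + 1 := by norm_num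
  rw [h, Gamma_add_one (by norm_num), Gamma_one_half_eq]
  ring

private lemma gamma_five_halves' : Gamma ((5:ℝ) / 2) = 3 * Real.sqrt π / 4 := by
  have h : ((5:ℝ)/2) = 3/2 + 1 := by norm_num
  rw [h, Gamma_add_one (by norm_num), gamma_three_halves']
  ring

private lemma two_rpow_three_halves' : (2:ℝ) ^ ((3:ℝ)/2) = 2 * Real.sqrt 2 := by
  have h : ((3:ℝ)/2) = 1 + 1/2 := by norm_num
  rw [h, Real.rpow_add (by norm_num), Real.rpow_one, ← Real.sqrt_eq_rpow]

private lemma two_rpow_five_halves' : (2:ℝ) ^ ((5:ℝ)/2) = 4 * Real.sqrt 2 := by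
  have h : ((5:ℝ)/2) = 2 + 1/2 := by norm_num
  rw [h, Real.rpow_add (by norm_num), ← Real.sqrt_eq_rpow]
  rw [show ((2:ℝ):ℝ)^(2:ℝ) = 4 by
    rw [show (2:ℝ)^(2:ℝ) = (2:ℝ)^((2:ℕ):ℝ) by norm_num, Real.rpow_natCast]; norm_num]

private lemma integral_sq_mul_gauss_half' :
    ∫ x : ℝ, x ^ 2 * rexp (-(2⁻¹ : ℝ) * x ^ 2) = Real.sqrt (2 * π) := by
  have h := integral_even_pow_mul_gauss' (b := (2⁻¹:ℝ)) (by norm_num) 1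
  push_cast at h
  rw [show (2*(1:ℝ)+1) = 3 by norm_num] at h
  rw [h, Real.inv_rpow (by norm_num : (0:ℝ) ≤ 2), ← Real.rpow_neg (by norm_num : (0:ℝ) ≤ 2),
    show -(-(3:ℝ)/2) = 3/2 by norm_num, two_rpow_three_halves', gamma_three_halves',
    Real.sqrt_mul (by norm_num : (0:ℝ) ≤ 2)]
  ring

private lemma integral_pow4_mul_gauss_half' :
    ∫ x : ℝ, x ^ 4 * rexp (-(2⁻¹ : ℝ) * x ^ 2) = 3 * Real.sqrt (2 * π) := by
  have h := integral_even_pow_mul_gauss' (b := (2⁻¹:ℝ)) (by norm_num) 2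
  push_cast at h
  rw [show (2*(2:ℝ)+1) = 5 by norm_num] at h
  rw [h, Real.inv_rpow (by norm_num : (0:ℝ) ≤ 2), ← Real.rpow_neg (by norm_num : (0:ℝ) ≤ 2),
    show -(-(5:ℝ)/2) = 5/2 by norm_num, two_rpow_five_halves', gamma_five_halves',
    Real.sqrt_mul (by norm_num : (0:ℝ) ≤ 2)]
  ring

private lemma gaussianPDFReal_std' (x : ℝ) :
    gaussianPDFReal 0 1 x = (Real.sqrt (2 * π))⁻¹ * rexp (-(2⁻¹:ℝ) * x ^ 2) := by
  simp only [gaussianPDFReal, NNReal.coe_one, mul_one, sub_zero]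
  ring_nf

private lemma sqrt_two_pi_pos' : 0 < Real.sqrt (2 * π) := by
  apply Real.sqrt_pos.2; positivity

private lemma integral_gaussianReal_std' (g : ℝ → ℝ) :
    ∫ x, g x ∂(gaussianReal 0 1) = ∫ x, gaussianPDFReal 0 1 x * g x := by
  rw [gaussianReal_of_var_ne_zero 0 one_ne_zero]
  have : gaussianPDF 0 1 = fun x => ((gaussianPDFReal 0 1 x).toNNReal : ℝ≥0∞) := rfl
  rw [this, integral_withDensity_eq_integral_smul
    ((measurable_gaussianPDFReal 0 1).real_toNNReal) g]
  congr 1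
  ext x
  simp [NNReal.smul_def, Real.coe_toNNReal _ (gaussianPDFReal_nonneg 0 1 x)]

private lemma integrable_gaussianReal_std' {g : ℝ → ℝ}
    (h : Integrable fun x => g x * rexp (-(2⁻¹:ℝ) * x ^ 2)) :
    Integrable g (gaussianReal 0 1) := by
  rw [gaussianReal_of_var_ne_zero 0 one_ne_zero]
  have hd : gaussianPDF 0 1 = fun x => ((gaussianPDFReal 0 1 x).toNNReal : ℝ≥0∞) := rfl
  rw [hd, integrable_withDensity_iff_integrable_smul
    ((measurable_gaussianPDFReal 0 1).real_toNNReal)]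
  refine (h.const_mul ((Real.sqrt (2 * π))⁻¹)).congr
    (Filter.Eventually.of_forall fun x => ?_)
  show (Real.sqrt (2 * π))⁻¹ * (g x * rexp (-(2⁻¹:ℝ) * x ^ 2))
      = (gaussianPDFReal 0 1 x).toNNReal • g x
  rw [NNReal.smul_def, Real.coe_toNNReal _ (gaussianPDFReal_nonneg 0 1 x),
    gaussianPDFReal_std', smul_eq_mul]
  ring

private lemma integrable_pow_gaussianReal_std' (k : ℕ) :
    Integrable (fun x => x ^ k) (gaussianReal 0 1) := by
  refine integrable_gaussianReal_std' ?_
  exact integrable_pow_mul_gauss' (by norm_num) k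

private lemma integral_sq_gaussianReal_std' : ∫ x, x ^ 2 ∂(gaussianReal 0 1) = 1 := by
  rw [integral_gaussianReal_std']
  have : (fun x => gaussianPDFReal 0 1 x * x ^ 2)
      = fun x => (Real.sqrt (2 * π))⁻¹ * (x ^ 2 * rexp (-(2⁻¹:ℝ) * x ^ 2)) := by
    ext x; rw [gaussianPDFReal_std']; ring
  rw [this, integral_const_mul, integral_sq_mul_gauss_half',
    inv_mul_cancel₀ sqrt_two_pi_pos'.ne']

private lemma integral_pow4_gaussianReal_std' : ∫ x, x ^ 4 ∂(gaussianReal 0 1) = 3 := by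
  rw [integral_gaussianReal_std']
  have : (fun x => gaussianPDFReal 0 1 x * x ^ 4)
      = fun x => (Real.sqrt (2 * π))⁻¹ * (x ^ 4 * rexp (-(2⁻¹:ℝ) * x ^ 2)) := by
    ext x; rw [gaussianPDFReal_std']; ring
  rw [this, integral_const_mul, integral_pow4_mul_gauss_half']
  field_simp

private lemma integral_id_gaussianReal_std' : ∫ x, x ∂(gaussianReal 0 1) = 0 := by
  have hmap : (gaussianReal 0 1).map (fun x => (-1 : ℝ) * x) = gaussianReal 0 1 := by
    rw [gaussianReal_map_const_mul (-1)]
    norm_num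
  have h1 : ∫ x, x ∂(gaussianReal 0 1) = ∫ x, (-1 : ℝ) * x ∂(gaussianReal 0 1) := by
    conv_lhs => rw [← hmap]
    exact integral_map (φ := fun x : ℝ => (-1:ℝ) * x) (f := fun x : ℝ => x)
      (by fun_prop) measurable_id.aestronglyMeasurable
  rw [integral_const_mul] at h1
  linarith

private lemma gaussianReal_eq_map' (v : ℝ≥0) :
    gaussianReal 0 v = (gaussianReal 0 1).map (fun x => (Real.sqrt v) * x) := by
  rw [gaussianReal_map_const_mul]
  congr
  · simp
  · ext
    simp [Real.sq_sqrt (v.coe_nonneg)]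

private lemma integrable_pow_gaussianReal' (v : ℝ≥0) (k : ℕ) :
    Integrable (fun x => x ^ k) (gaussianReal 0 v) := by
  rw [gaussianReal_eq_map']
  rw [integrable_map_measure (by fun_prop) (by fun_prop)]
  have : ((fun x : ℝ => x ^ k) ∘ fun x => (Real.sqrt v) * x)
      = fun x => (Real.sqrt v) ^ k * x ^ k := by ext x; simp [mul_pow]
  rw [this]
  exact (integrable_pow_gaussianReal_std' k).const_mul _

private lemma integral_pow_gaussianReal_map' (v : ℝ≥0) (k : ℕ) :
    ∫ x, x ^ k ∂(gaussianReal 0 v) = (Real.sqrt v) ^ k * ∫ x, x ^ k ∂(gaussianReal 0 1) := by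
  rw [gaussianReal_eq_map', integral_map (by fun_prop) (by fun_prop)]
  simp_rw [mul_pow]
  rw [integral_const_mul]

private lemma integral_id_gaussianReal' (v : ℝ≥0) : ∫ x, x ∂(gaussianReal 0 v) = 0 := by
  have := integral_pow_gaussianReal_map' v 1
  simpa [integral_id_gaussianReal_std'] using this

private lemma integral_sq_gaussianReal' (v : ℝ≥0) : ∫ x, x ^ 2 ∂(gaussianReal 0 v) = v := by
  rw [integral_pow_gaussianReal_map', integral_sq_gaussianReal_std',
    Real.sq_sqrt v.coe_nonneg, mul_one]

private lemma integral_pow4_gaussianReal' (v : ℝ≥0) :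
    ∫ x, x ^ 4 ∂(gaussianReal 0 v) = 3 * (v:ℝ) ^ 2 := by
  rw [integral_pow_gaussianReal_map', integral_pow4_gaussianReal_std']
  rw [show (Real.sqrt v) ^ 4 = ((Real.sqrt v) ^ 2) ^ 2 by ring, Real.sq_sqrt v.coe_nonneg]
  ring

end AuxGauss

section AuxOmega
open scoped ENNReal NNReal
variable {Ω : Type*} [MeasurableSpace Ω] {μ : Measure Ω} {X Y : Ω → ℝ} {v : ℝ≥0}

private lemma gmap.integrable_pow (hX : Measurable X) (h : μ.map X = gaussianReal 0 v)
    (k : ℕ) : Integrable (fun ω => X ω ^ k) μ := by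
  have := (integrable_map_measure (f := X) (g := fun x : ℝ => x ^ k)
    (by rw [h]; fun_prop) hX.aemeasurable).1 (by rw [h]; exact integrable_pow_gaussianReal' v k)
  exact this

private lemma gmap.integral_pow (hX : Measurable X) (h : μ.map X = gaussianReal 0 v) (k : ℕ) :
    ∫ ω, X ω ^ k ∂μ = ∫ x, x ^ k ∂(gaussianReal 0 v) := by
  rw [← h, integral_map hX.aemeasurable (by rw [h]; fun_prop)]

private lemma gmap.integral_id (hX : Measurable X) (h : μ.map X = gaussianReal 0 v) :
    ∫ ω, X ω ∂μ = 0 := by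
  have := gmap.integral_pow hX h 1
  simpa [integral_id_gaussianReal'] using this

private lemma gmap.integral_sq (hX : Measurable X) (h : μ.map X = gaussianReal 0 v) :
    ∫ ω, X ω ^ 2 ∂μ = v := by
  rw [gmap.integral_pow hX h 2, integral_sq_gaussianReal']

private lemma gmap.integral_pow4 (hX : Measurable X) (h : μ.map X = gaussianReal 0 v) :
    ∫ ω, X ω ^ 4 ∂μ = 3 * (v:ℝ) ^ 2 := by
  rw [gmap.integral_pow hX h 4, integral_pow4_gaussianReal']

private lemma gmap.memℒp_two (hX : Measurable X) (h : μ.map X = gaussianReal 0 v) :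
    MemLp X 2 μ := by
  refine (memLp_two_iff_integrable_sq hX.aestronglyMeasurable).2 ?_
  exact gmap.integrable_pow hX h 2

private lemma gmap.memℒp_sq_two (hX : Measurable X) (h : μ.map X = gaussianReal 0 v) :
    MemLp (fun ω => X ω ^ 2) 2 μ := by
  refine (memLp_two_iff_integrable_sq ((hX.pow_const 2).aestronglyMeasurable)).2 ?_
  have := gmap.integrable_pow hX h 4
  refine this.congr (Filter.Eventually.of_forall fun ω => ?_)
  ring

private lemma memℒp_mul_integrable' (hX : MemLp X 2 μ) (hY : MemLp Y 2 μ) :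
    Integrable (fun ω => X ω * Y ω) μ := by
  rw [← memLp_one_iff_integrable]
  have h1 : (1:ℝ≥0∞) / 1 = 1 / 2 + 1 / 2 := by rw [ENNReal.add_halves]; simp
  have := hX.smul (φ := Y) hY (p := 2) (q := 2) (r := 1)
  refine this.ae_eq (Filter.Eventually.of_forall fun ω => ?_)
  show Y ω • X ω = X ω * Y ω
  simp [smul_eq_mul, mul_comm]

private lemma gmap.variance_eq [IsProbabilityMeasure μ] (hX : Measurable X)
    (h : μ.map X = gaussianReal 0 v) : variance X μ = v := by
  rw [variance_eq_sub (gmap.memℒp_two hX h)]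
  have h2 : μ[X ^ 2] = (v:ℝ) := by
    have := gmap.integral_sq hX h
    simpa [Pi.pow_apply] using this
  have h1 : μ[X] = 0 := gmap.integral_id hX h
  rw [h2, h1]
  ring

private lemma pair_integral_sq_sq' (hX : Measurable X) (hY : Measurable Y)
    (hmX : μ.map X = gaussianReal 0 1) (hmY : μ.map Y = gaussianReal 0 1)
    {vp vm : ℝ≥0}
    (hp : μ.map (fun ω => X ω + Y ω) = gaussianReal 0 vp)
    (hm : μ.map (fun ω => X ω - Y ω) = gaussianReal 0 vm) :
    ∫ ω, X ω ^ 2 * Y ω ^ 2 ∂μ = 1 + 2 * (∫ ω, X ω * Y ω ∂μ) ^ 2 := by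
  set c := ∫ ω, X ω * Y ω ∂μ with hc
  have hX2 : MemLp X 2 μ := gmap.memℒp_two hX hmX
  have hY2 : MemLp Y 2 μ := gmap.memℒp_two hY hmY
  have hiXY : Integrable (fun ω => X ω * Y ω) μ := memℒp_mul_integrable' hX2 hY2
  have hiX2 : Integrable (fun ω => X ω ^ 2) μ := gmap.integrable_pow hX hmX 2
  have hiY2 : Integrable (fun ω => Y ω ^ 2) μ := gmap.integrable_pow hY hmY 2
  have hiX4 : Integrable (fun ω => X ω ^ 4) μ := gmap.integrable_pow hX hmX 4
  have hiY4 : Integrable (fun ω => Y ω ^ 4) μ := gmap.integrable_pow hY hmY 4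
  have hiX2Y2 : Integrable (fun ω => X ω ^ 2 * Y ω ^ 2) μ :=
    memℒp_mul_integrable' (gmap.memℒp_sq_two hX hmX) (gmap.memℒp_sq_two hY hmY)
  have hIX2 : ∫ ω, X ω ^ 2 ∂μ = 1 := by rw [gmap.integral_sq hX hmX]; norm_num
  have hIY2 : ∫ ω, Y ω ^ 2 ∂μ = 1 := by rw [gmap.integral_sq hY hmY]; norm_num
  have hvp : (vp : ℝ) = 2 + 2 * c := by
    have h1 : ∫ ω, (X ω + Y ω) ^ 2 ∂μ = vp := gmap.integral_sq (hX.add hY) hp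
    have h2 : ∫ ω, (X ω + Y ω) ^ 2 ∂μ
        = (∫ ω, X ω ^ 2 ∂μ) + 2 * c + ∫ ω, Y ω ^ 2 ∂μ := by
      have he : (fun ω => (X ω + Y ω) ^ 2)
          = fun ω => (X ω ^ 2 + 2 * (X ω * Y ω)) + Y ω ^ 2 := by ext ω; ring
      rw [he, integral_add (by exact hiX2.add (hiXY.const_mul 2)) hiY2,
        integral_add hiX2 (hiXY.const_mul 2), integral_const_mul]
    rw [h1] at h2
    rw [h2, hIX2, hIY2]; ring
  have hvm : (vm : ℝ) = 2 - 2 * c := by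
    have h1 : ∫ ω, (X ω - Y ω) ^ 2 ∂μ = vm := gmap.integral_sq (hX.sub hY) hm
    have h2 : ∫ ω, (X ω - Y ω) ^ 2 ∂μ
        = (∫ ω, X ω ^ 2 ∂μ) - 2 * c + ∫ ω, Y ω ^ 2 ∂μ := by
      have he : (fun ω => (X ω - Y ω) ^ 2)
          = fun ω => (X ω ^ 2 - 2 * (X ω * Y ω)) + Y ω ^ 2 := by ext ω; ring
      rw [he, integral_add (by exact hiX2.sub (hiXY.const_mul 2)) hiY2,
        integral_sub hiX2 (hiXY.const_mul 2), integral_const_mul]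
    rw [h1] at h2
    rw [h2, hIX2, hIY2]; ring
  have hp4 : ∫ ω, (X ω + Y ω) ^ 4 ∂μ = 3 * (vp : ℝ) ^ 2 :=
    gmap.integral_pow4 (hX.add hY) hp
  have hm4 : ∫ ω, (X ω - Y ω) ^ 4 ∂μ = 3 * (vm : ℝ) ^ 2 :=
    gmap.integral_pow4 (hX.sub hY) hm
  have hi_p4 : Integrable (fun ω => (X ω + Y ω) ^ 4) μ :=
    gmap.integrable_pow (hX.add hY) hp 4
  have hi_m4 : Integrable (fun ω => (X ω - Y ω) ^ 4) μ :=
    gmap.integrable_pow (hX.sub hY) hm 4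
  have hkey : ∫ ω, ((X ω + Y ω) ^ 4 + (X ω - Y ω) ^ 4) ∂μ
      = 2 * (∫ ω, X ω ^ 4 ∂μ) + 12 * (∫ ω, X ω ^ 2 * Y ω ^ 2 ∂μ)
        + 2 * ∫ ω, Y ω ^ 4 ∂μ := by
    have he : (fun ω => (X ω + Y ω) ^ 4 + (X ω - Y ω) ^ 4)
        = fun ω => (2 * X ω ^ 4 + 12 * (X ω ^ 2 * Y ω ^ 2)) + 2 * Y ω ^ 4 := by
      ext ω; ring
    rw [he, integral_add (by exact (hiX4.const_mul 2).add (hiX2Y2.const_mul 12))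
      (hiY4.const_mul 2), integral_add (hiX4.const_mul 2) (hiX2Y2.const_mul 12),
      integral_const_mul, integral_const_mul, integral_const_mul]
  have hsum4 : ∫ ω, ((X ω + Y ω) ^ 4 + (X ω - Y ω) ^ 4) ∂μ
      = 3 * (vp:ℝ) ^ 2 + 3 * (vm:ℝ) ^ 2 := by
    rw [integral_add hi_p4 hi_m4, hp4, hm4]
  have hIX4 : ∫ ω, X ω ^ 4 ∂μ = 3 := by
    rw [gmap.integral_pow4 hX hmX]; norm_num
  have hIY4 : ∫ ω, Y ω ^ 4 ∂μ = 3 := by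
    rw [gmap.integral_pow4 hY hmY]; norm_num
  rw [hkey, hIX4, hIY4, hvp, hvm] at hsum4
  nlinarith [hsum4]

end AuxOmega

section AuxComb
open Set

private lemma dist_sum_bound' (n : ℕ) (s : Fin n) (ρ : ℕ → ℝ)
    (hsum : Summable fun τ => ρ τ ^ 2) :
    ∑ t : Fin n, ρ (Nat.dist (s:ℕ) (t:ℕ)) ^ 2 ≤ ρ 0 ^ 2 + 2 * ∑' τ : ℕ, ρ (τ + 1) ^ 2 := by
  have hg : Summable (fun τ => ρ (τ + 1) ^ 2) := (summable_nat_add_iff 1).2 hsum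
  have hsplit : ∑ t : Fin n, ρ (Nat.dist (s:ℕ) (t:ℕ)) ^ 2
      = ρ (Nat.dist (s:ℕ) (s:ℕ)) ^ 2
        + ∑ t ∈ Finset.univ.erase s, ρ (Nat.dist (s:ℕ) (t:ℕ)) ^ 2 :=
    (Finset.add_sum_erase _ _ (Finset.mem_univ s)).symm
  rw [hsplit, Nat.dist_self]
  have herase : ∑ t ∈ Finset.univ.erase s, ρ (Nat.dist (s:ℕ) (t:ℕ)) ^ 2
      = (∑ t ∈ (Finset.univ.erase s).filter (fun t : Fin n => (t:ℕ) < (s:ℕ)),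
          ρ (Nat.dist (s:ℕ) (t:ℕ)) ^ 2)
        + ∑ t ∈ (Finset.univ.erase s).filter (fun t : Fin n => ¬ (t:ℕ) < (s:ℕ)),
          ρ (Nat.dist (s:ℕ) (t:ℕ)) ^ 2 :=
    (Finset.sum_filter_add_sum_filter_not _ _ _).symm
  have hb1 : ∑ t ∈ (Finset.univ.erase s).filter (fun t : Fin n => (t:ℕ) < (s:ℕ)),
      ρ (Nat.dist (s:ℕ) (t:ℕ)) ^ 2 ≤ ∑' τ : ℕ, ρ (τ + 1) ^ 2 := by
    have he : ∑ t ∈ (Finset.univ.erase s).filter (fun t : Fin n => (t:ℕ) < (s:ℕ)),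
        ρ (Nat.dist (s:ℕ) (t:ℕ)) ^ 2
        = ∑ k ∈ ((Finset.univ.erase s).filter (fun t : Fin n => (t:ℕ) < (s:ℕ))).image
            (fun t : Fin n => (s:ℕ) - (t:ℕ) - 1), ρ (k + 1) ^ 2 := by
      rw [Finset.sum_image]
      · refine Finset.sum_congr rfl (fun t ht => ?_)
        simp only [Finset.mem_filter] at ht
        have : Nat.dist (s:ℕ) (t:ℕ) = ((s:ℕ) - (t:ℕ) - 1) + 1 := by
          rw [Nat.dist_eq_sub_of_le_right ht.2.le]
          omega
        rw [this]
      · intro x hx y hy hxy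
        simp only [Finset.mem_coe, Finset.mem_filter] at hx hy
        have hxy' : (s:ℕ) - (x:ℕ) - 1 = (s:ℕ) - (y:ℕ) - 1 := hxy
        have : (x:ℕ) = (y:ℕ) := by omega
        exact Fin.ext this
    rw [he]
    exact Summable.sum_le_tsum _ (fun k _ => sq_nonneg _) hg
  have hb2 : ∑ t ∈ (Finset.univ.erase s).filter (fun t : Fin n => ¬ (t:ℕ) < (s:ℕ)),
      ρ (Nat.dist (s:ℕ) (t:ℕ)) ^ 2 ≤ ∑' τ : ℕ, ρ (τ + 1) ^ 2 := by
    have he : ∑ t ∈ (Finset.univ.erase s).filter (fun t : Fin n => ¬ (t:ℕ) < (s:ℕ)),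
        ρ (Nat.dist (s:ℕ) (t:ℕ)) ^ 2
        = ∑ k ∈ ((Finset.univ.erase s).filter (fun t : Fin n => ¬ (t:ℕ) < (s:ℕ))).image
            (fun t : Fin n => (t:ℕ) - (s:ℕ) - 1), ρ (k + 1) ^ 2 := by
      rw [Finset.sum_image]
      · refine Finset.sum_congr rfl (fun t ht => ?_)
        simp only [Finset.mem_filter, Finset.mem_erase] at ht
        have hne : (t:ℕ) ≠ (s:ℕ) := fun hc => ht.1.1 (Fin.ext hc)
        have : Nat.dist (s:ℕ) (t:ℕ) = ((t:ℕ) - (s:ℕ) - 1) + 1 := by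
          rw [Nat.dist_eq_sub_of_le (by omega)]
          omega
        rw [this]
      · intro x hx y hy hxy
        simp only [Finset.mem_coe, Finset.mem_filter, Finset.mem_erase] at hx hy
        have hxne : (x:ℕ) ≠ (s:ℕ) := fun hc => hx.1.1 (Fin.ext hc)
        have hyne : (y:ℕ) ≠ (s:ℕ) := fun hc => hy.1.1 (Fin.ext hc)
        have hxy' : (x:ℕ) - (s:ℕ) - 1 = (y:ℕ) - (s:ℕ) - 1 := hxy
        have : (x:ℕ) = (y:ℕ) := by omega
        exact Fin.ext this
    rw [he]
    exact Summable.sum_le_tsum _ (fun k _ => sq_nonneg _) hg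
  rw [herase]
  linarith

end AuxComb

/-- **Variance bound for weighted sums of squares of correlated standard Gaussians.**
If `(Z_1, …, Z_n)` is a centered jointly Gaussian vector with unit variances and
`|Cov(Z_s, Z_t)| ≤ ρ(|s − t|)` where `ρ²_∞ = ρ(0)² + 2·Σ_{τ≥1} ρ(τ)² < ∞`, then for
coefficients with `max_t |a_t| ≤ A`,
`Var(n^{−1/2} Σ_t a_t Z_t²) ≤ 2·A²·ρ²_∞`. -/
theorem variance_weighted_sq_gaussian {Ω : Type*} [MeasurableSpace Ω] (μ : Measure Ω)
    [IsProbabilityMeasure μ] (n : ℕ) (hn : 1 ≤ n) (Z : Fin n → Ω → ℝ)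
    (hmeas : ∀ t, Measurable (Z t))
    (hgauss : ∀ a : Fin n → ℝ, ∃ v : NNReal,
      Measure.map (fun ω => ∑ t, a t * Z t ω) μ = gaussianReal 0 v)
    (hvar : ∀ t, variance (Z t) μ = 1)
    (ρ : ℕ → ℝ) (hρpos : ∀ τ, 0 ≤ ρ τ) (hsum : Summable fun τ => (ρ τ) ^ 2)
    (hcov : ∀ s t : Fin n,
      |(∫ ω, Z s ω * Z t ω ∂μ) - (∫ ω, Z s ω ∂μ) * ∫ ω, Z t ω ∂μ| ≤
        ρ (Nat.dist (s : ℕ) (t : ℕ)))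
    (a : Fin n → ℝ) (A : ℝ) (hA : ∀ t, |a t| ≤ A) :
    variance (fun ω => (Real.sqrt n)⁻¹ * ∑ t, a t * (Z t ω) ^ 2) μ ≤
      2 * A ^ 2 * ((ρ 0) ^ 2 + 2 * ∑' τ : ℕ, (ρ (τ + 1)) ^ 2) := by
  have hA0 : 0 ≤ A := le_trans (abs_nonneg _) (hA ⟨0, hn⟩)
  -- each Z t is standard gaussian
  have hlaw : ∀ t, μ.map (Z t) = gaussianReal 0 1 := by
    intro t
    obtain ⟨v, hv⟩ := hgauss (fun u => if u = t then 1 else 0)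
    have he : (fun ω => ∑ u, (if u = t then (1:ℝ) else 0) * Z u ω) = Z t := by
      ext ω
      rw [Finset.sum_congr rfl (fun u _ => by
        rw [ite_mul, one_mul, zero_mul] :
        ∀ u ∈ Finset.univ, (if u = t then (1:ℝ) else 0) * Z u ω
          = if u = t then Z u ω else 0)]
      simp [Finset.sum_ite_eq']
    rw [he] at hv
    have hvar1 : variance (Z t) μ = v := gmap.variance_eq (hmeas t) hv
    have hv1 : (v : ℝ) = 1 := by rw [← hvar1, hvar t]
    have : v = 1 := by exact_mod_cast hv1
    rw [hv, this]
  -- pair computation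
  have hpair : ∀ s t : Fin n, ∫ ω, Z s ω ^ 2 * Z t ω ^ 2 ∂μ
      = 1 + 2 * (∫ ω, Z s ω * Z t ω ∂μ) ^ 2 := by
    intro s t
    obtain ⟨vp, hvp⟩ := hgauss (fun u => (if u = s then (1:ℝ) else 0) + if u = t then 1 else 0)
    obtain ⟨vm, hvm⟩ := hgauss (fun u => (if u = s then (1:ℝ) else 0) - if u = t then 1 else 0)
    have hesum : ∀ (c : Fin n) (ω : Ω),
        ∑ u, (if u = c then (1:ℝ) else 0) * Z u ω = Z c ω := by
      intro c ω
      rw [Finset.sum_congr rfl (fun u _ => by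
        rw [ite_mul, one_mul, zero_mul] :
        ∀ u ∈ Finset.univ, (if u = c then (1:ℝ) else 0) * Z u ω
          = if u = c then Z u ω else 0)]
      simp [Finset.sum_ite_eq']
    have hep : (fun ω => ∑ u, ((if u = s then (1:ℝ) else 0) + if u = t then 1 else 0) * Z u ω)
        = fun ω => Z s ω + Z t ω := by
      ext ω
      simp_rw [add_mul]
      rw [Finset.sum_add_distrib, hesum s ω, hesum t ω]
    have hem : (fun ω => ∑ u, ((if u = s then (1:ℝ) else 0) - if u = t then 1 else 0) * Z u ω)
        = fun ω => Z s ω - Z t ω := by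
      ext ω
      simp_rw [sub_mul]
      rw [Finset.sum_sub_distrib, hesum s ω, hesum t ω]
    rw [hep] at hvp
    rw [hem] at hvm
    exact pair_integral_sq_sq' (hmeas s) (hmeas t) (hlaw s) (hlaw t) hvp hvm
  -- integrabilities
  have hiZ2 : ∀ t, Integrable (fun ω => Z t ω ^ 2) μ :=
    fun t => gmap.integrable_pow (hmeas t) (hlaw t) 2
  have hL2sq : ∀ t, MemLp (fun ω => Z t ω ^ 2) 2 μ :=
    fun t => gmap.memℒp_sq_two (hmeas t) (hlaw t)
  have hiZ22 : ∀ s t : Fin n, Integrable (fun ω => Z s ω ^ 2 * Z t ω ^ 2) μ :=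
    fun s t => memℒp_mul_integrable' (hL2sq s) (hL2sq t)
  have hIZ2 : ∀ t, ∫ ω, Z t ω ^ 2 ∂μ = 1 := by
    intro t
    rw [gmap.integral_sq (hmeas t) (hlaw t)]
    norm_num
  set S : Ω → ℝ := fun ω => ∑ t, a t * Z t ω ^ 2 with hS
  have hMS : MemLp S 2 μ := by
    refine memLp_finset_sum _ (fun t _ => ?_)
    exact (hL2sq t).const_mul (a t)
  have hES : ∫ ω, S ω ∂μ = ∑ t, a t := by
    rw [hS]
    rw [integral_finset_sum _ (fun t _ => (hiZ2 t).const_mul (a t))]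
    refine Finset.sum_congr rfl (fun t _ => ?_)
    rw [integral_const_mul, hIZ2 t, mul_one]
  have hES2 : ∫ ω, S ω ^ 2 ∂μ
      = ∑ s, ∑ t, a s * a t * (1 + 2 * (∫ ω, Z s ω * Z t ω ∂μ) ^ 2) := by
    have he : (fun ω => S ω ^ 2)
        = fun ω => ∑ s, ∑ t, (a s * a t) * (Z s ω ^ 2 * Z t ω ^ 2) := by
      ext ω
      rw [hS]
      rw [sq, Finset.sum_mul_sum]
      refine Finset.sum_congr rfl (fun s _ => Finset.sum_congr rfl (fun t _ => by ring))
    rw [he, integral_finset_sum _ (fun s _ => integrable_finset_sum _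
      (fun t _ => (hiZ22 s t).const_mul (a s * a t)))]
    refine Finset.sum_congr rfl (fun s _ => ?_)
    rw [integral_finset_sum _ (fun t _ => (hiZ22 s t).const_mul (a s * a t))]
    refine Finset.sum_congr rfl (fun t _ => ?_)
    rw [integral_const_mul, hpair s t]
  -- variance of S
  have hVarS : variance S μ = ∑ s, ∑ t, 2 * (a s * a t) * (∫ ω, Z s ω * Z t ω ∂μ) ^ 2 := by
    rw [variance_eq_sub hMS]
    have h1 : μ[S ^ 2] = ∫ ω, S ω ^ 2 ∂μ := by
      simp [Pi.pow_apply]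
    have h2 : μ[S] = ∫ ω, S ω ∂μ := rfl
    rw [h1, h2, hES2, hES, sq, Finset.sum_mul_sum, ← Finset.sum_sub_distrib]
    refine Finset.sum_congr rfl (fun s _ => ?_)
    rw [← Finset.sum_sub_distrib]
    refine Finset.sum_congr rfl (fun t _ => by ring)
  -- termwise bound
  have hterm : ∀ s t : Fin n, 2 * (a s * a t) * (∫ ω, Z s ω * Z t ω ∂μ) ^ 2
      ≤ 2 * A ^ 2 * ρ (Nat.dist (s:ℕ) (t:ℕ)) ^ 2 := by
    intro s t
    set c := ∫ ω, Z s ω * Z t ω ∂μ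
    have hmean : ∀ u, ∫ ω, Z u ω ∂μ = 0 := fun u => gmap.integral_id (hmeas u) (hlaw u)
    have hc : |c| ≤ ρ (Nat.dist (s:ℕ) (t:ℕ)) := by
      have := hcov s t
      rwa [hmean s, hmean t, zero_mul, sub_zero] at this
    have hcsq : c ^ 2 ≤ ρ (Nat.dist (s:ℕ) (t:ℕ)) ^ 2 :=
      sq_le_sq' (by linarith [(abs_le.1 hc).1]) (abs_le.1 hc).2
    have h1 : a s * a t ≤ A ^ 2 := by
      calc a s * a t ≤ |a s * a t| := le_abs_self _
        _ = |a s| * |a t| := abs_mul _ _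
        _ ≤ A * A := mul_le_mul (hA s) (hA t) (abs_nonneg _) hA0
        _ = A ^ 2 := (sq A).symm
    calc 2 * (a s * a t) * c ^ 2 ≤ 2 * A ^ 2 * c ^ 2 := by nlinarith [sq_nonneg c]
      _ ≤ 2 * A ^ 2 * ρ (Nat.dist (s:ℕ) (t:ℕ)) ^ 2 := by nlinarith [sq_nonneg A]
  -- sum bound
  have hsumbound : variance S μ
      ≤ (n : ℝ) * (2 * A ^ 2 * ((ρ 0) ^ 2 + 2 * ∑' τ : ℕ, (ρ (τ + 1)) ^ 2)) := by
    rw [hVarS]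
    calc ∑ s, ∑ t, 2 * (a s * a t) * (∫ ω, Z s ω * Z t ω ∂μ) ^ 2
        ≤ ∑ s : Fin n, ∑ t : Fin n, 2 * A ^ 2 * ρ (Nat.dist (s:ℕ) (t:ℕ)) ^ 2 :=
          Finset.sum_le_sum (fun s _ => Finset.sum_le_sum (fun t _ => hterm s t))
      _ = ∑ s : Fin n, 2 * A ^ 2 * ∑ t : Fin n, ρ (Nat.dist (s:ℕ) (t:ℕ)) ^ 2 := by
          refine Finset.sum_congr rfl (fun s _ => ?_)
          rw [Finset.mul_sum]
      _ ≤ ∑ s : Fin n, 2 * A ^ 2 * ((ρ 0) ^ 2 + 2 * ∑' τ : ℕ, (ρ (τ + 1)) ^ 2) := by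
          refine Finset.sum_le_sum (fun s _ => ?_)
          have := dist_sum_bound' n s ρ hsum
          nlinarith [sq_nonneg A]
      _ = (n : ℝ) * (2 * A ^ 2 * ((ρ 0) ^ 2 + 2 * ∑' τ : ℕ, (ρ (τ + 1)) ^ 2)) := by
          rw [Finset.sum_const, Finset.card_univ, Fintype.card_fin, nsmul_eq_mul]
  -- conclude
  have hvfull : variance (fun ω => (Real.sqrt n)⁻¹ * ∑ t, a t * (Z t ω) ^ 2) μ
      = (n : ℝ)⁻¹ * variance S μ := by
    rw [show (fun ω => (Real.sqrt n)⁻¹ * ∑ t, a t * (Z t ω) ^ 2)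
        = fun ω => (Real.sqrt n)⁻¹ * S ω from rfl]
    rw [variance_const_mul]
    congr 1
    rw [inv_pow, Real.sq_sqrt (Nat.cast_nonneg n)]
  rw [hvfull]
  have hnpos : (0:ℝ) < n := by exact_mod_cast hn
  calc (n : ℝ)⁻¹ * variance S μ
      ≤ (n : ℝ)⁻¹ * ((n : ℝ) * (2 * A ^ 2 * ((ρ 0) ^ 2 + 2 * ∑' τ : ℕ, (ρ (τ + 1)) ^ 2))) :=
        mul_le_mul_of_nonneg_left hsumbound (by positivity)
    _ = 2 * A ^ 2 * ((ρ 0) ^ 2 + 2 * ∑' τ : ℕ, (ρ (τ + 1)) ^ 2) := by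
        field_simp
end
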